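/- Let f: 2^{[n]} → R be a monotone submodular function with f(∅) = 0, let X_1,...,X_n be independent {0,1}-valued random variables, and define Y_k = f({i ≤ k : X_i = 1}) - f({i ≤ k-1 : X_i = 1}). Then for every λ ∈ R, E[e^{λ∑_{i=1}^n Y_i}] ≤ ∏_{i=1}^n E[e^{λY_i}]. -/

import Mathlib

open MeasureTheory ProbabilityTheory Finset

namespace Stmt7Aux

/-- Expectation of `g` over the boolean cube with product weights `w`. -/
noncomputable def Ew {m : ℕ} (w : Fin m → Bool → ℝ) (g : (Fin m → Bool) → ℝ) : ℝ :=
  ∑ s : Fin m → Bool, (∏ i, w i (s i)) * g s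

lemma Ew_mono {m : ℕ} {w : Fin m → Bool → ℝ} (hw0 : ∀ i b, 0 ≤ w i b)
    {g h : (Fin m → Bool) → ℝ} (hgh : ∀ s, g s ≤ h s) : Ew w g ≤ Ew w h := by
  refine Finset.sum_le_sum fun s _ => ?_
  exact mul_le_mul_of_nonneg_left (hgh s) (Finset.prod_nonneg fun i _ => hw0 i (s i))

lemma Ew_nonneg {m : ℕ} {w : Fin m → Bool → ℝ} (hw0 : ∀ i b, 0 ≤ w i b)
    {g : (Fin m → Bool) → ℝ} (hg : ∀ s, 0 ≤ g s) : 0 ≤ Ew w g := by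
  have := Ew_mono hw0 (g := fun _ => 0) (h := g) hg
  simpa [Ew] using this

lemma Ew_cons {m : ℕ} (w : Fin (m + 1) → Bool → ℝ) (g : (Fin (m + 1) → Bool) → ℝ) :
    Ew w g = ∑ b : Bool, w 0 b *
      Ew (fun i => w i.succ) (fun s => g (Fin.cons b s)) := by
  rw [Ew, ← Equiv.sum_comp (Fin.consEquiv (fun _ : Fin (m+1) => Bool))]
  rw [Fintype.sum_prod_type]
  refine Finset.sum_congr rfl fun b _ => ?_
  rw [Ew, Finset.mul_sum]
  refine Finset.sum_congr rfl fun s _ => ?_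
  have : (∏ i, w i ((Fin.consEquiv (fun _ : Fin (m+1) => Bool)) (b, s) i))
      = w 0 b * ∏ i : Fin m, w i.succ (s i) := by
    rw [Fin.prod_univ_succ]
    simp [Fin.consEquiv]
  rw [this]
  simp [Fin.consEquiv]
  ring

lemma Ew_one {m : ℕ} (w : Fin m → Bool → ℝ) (hw1 : ∀ i, w i false + w i true = 1) :
    Ew w (fun _ => 1) = 1 := by
  induction m with
  | zero => simp [Ew]
  | succ m ih =>
      rw [Ew_cons, Fintype.sum_bool]
      rw [ih (fun i => w i.succ) (fun i => hw1 i.succ)]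
      have := hw1 0
      linarith

lemma chebyshev_two_point {w0 w1 G0 G1 H0 H1 : ℝ} (h0 : 0 ≤ w0) (h1 : 0 ≤ w1)
    (hw : w0 + w1 = 1) (hG : G0 ≤ G1) (hH : H1 ≤ H0) :
    w0 * (G0 * H0) + w1 * (G1 * H1) ≤ (w0 * G0 + w1 * G1) * (w0 * H0 + w1 * H1) := by
  have hsub : w1 = 1 - w0 := by linarith
  subst hsub
  nlinarith [mul_nonneg (mul_nonneg h0 h1) (mul_nonneg (sub_nonneg.2 hG) (sub_nonneg.2 hH))]

lemma cons_le_cons {m : ℕ} (b : Bool) {s t : Fin m → Bool} (hst : s ≤ t) :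
    (Fin.cons b s : Fin (m+1) → Bool) ≤ Fin.cons b t := by
  intro i
  refine Fin.cases ?_ (fun j => ?_) i <;> simp [hst _]

lemma cons_mono {m : ℕ} {b b' : Bool} (hb : b ≤ b') {s : Fin m → Bool} :
    (Fin.cons b s : Fin (m+1) → Bool) ≤ Fin.cons b' s := by
  intro i
  refine Fin.cases ?_ (fun j => ?_) i <;> simp [hb]

/-- Harris / FKG inequality on the boolean cube with product weights. -/
lemma harris {m : ℕ} (w : Fin m → Bool → ℝ) (hw0 : ∀ i b, 0 ≤ w i b)
    (hw1 : ∀ i, w i false + w i true = 1)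
    {g h : (Fin m → Bool) → ℝ} (hg : Monotone g) (hh : Antitone h) :
    Ew w (fun s => g s * h s) ≤ Ew w g * Ew w h := by
  induction m with
  | zero =>
      simp [Ew]
  | succ m ih =>
      rw [Ew_cons w (fun s => g s * h s), Ew_cons w g, Ew_cons w h]
      simp only [Fintype.sum_bool]
      set w' : Fin m → Bool → ℝ := fun i => w i.succ with hw'
      have hw0' : ∀ i b, 0 ≤ w' i b := fun i b => hw0 i.succ b
      have hw1' : ∀ i, w' i false + w' i true = 1 := fun i => hw1 i.succ
      have key : ∀ b : Bool, Ew w' (fun s => g (Fin.cons b s) * h (Fin.cons b s))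
          ≤ Ew w' (fun s => g (Fin.cons b s)) * Ew w' (fun s => h (Fin.cons b s)) := by
        intro b
        refine ih w' hw0' hw1' ?_ ?_
        · exact fun s t hst => hg (cons_le_cons b hst)
        · exact fun s t hst => hh (cons_le_cons b hst)
      have hGmono : Ew w' (fun s => g (Fin.cons false s)) ≤ Ew w' (fun s => g (Fin.cons true s)) :=
        Ew_mono hw0' fun s => hg (cons_mono (by simp))
      have hHanti : Ew w' (fun s => h (Fin.cons true s)) ≤ Ew w' (fun s => h (Fin.cons false s)) :=
        Ew_mono hw0' fun s => hh (cons_mono (by simp))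
      calc w 0 true * Ew w' (fun s => g (Fin.cons true s) * h (Fin.cons true s))
            + w 0 false * Ew w' (fun s => g (Fin.cons false s) * h (Fin.cons false s))
          ≤ w 0 true * (Ew w' (fun s => g (Fin.cons true s)) * Ew w' (fun s => h (Fin.cons true s)))
            + w 0 false * (Ew w' (fun s => g (Fin.cons false s)) * Ew w' (fun s => h (Fin.cons false s))) := by
            gcongr <;> [exact hw0 0 true; exact key true; exact hw0 0 false; exact key false]
        _ ≤ (w 0 true * Ew w' (fun s => g (Fin.cons true s))
              + w 0 false * Ew w' (fun s => g (Fin.cons false s)))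
            * (w 0 true * Ew w' (fun s => h (Fin.cons true s))
              + w 0 false * Ew w' (fun s => h (Fin.cons false s))) := by
            have := chebyshev_two_point (hw0 0 false) (hw0 0 true) (hw1 0) hGmono hHanti
            linarith

lemma prod_update {m : ℕ} (w : Fin m → Bool → ℝ) (s : Fin m → Bool) (k : Fin m) (b : Bool) :
    (∏ i, w i (Function.update s k b i)) = w k b * ∏ i ∈ univ.erase k, w i (s i) := by
  rw [← Finset.mul_prod_erase univ (fun i => w i (Function.update s k b i)) (mem_univ k)]
  congr 1
  · rw [Function.update_self]
  · exact Finset.prod_congr rfl fun i hi => by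
      rw [Function.update_of_ne (Finset.mem_erase.1 hi).1]

/-- Conditioning on coordinate `k`. -/
lemma Ew_subst {m : ℕ} (w : Fin m → Bool → ℝ) (hw1 : ∀ i, w i false + w i true = 1)
    (k : Fin m) (g : (Fin m → Bool) → ℝ) :
    ∑ b : Bool, w k b * Ew w (fun s => g (Function.update s k b)) = Ew w g := by
  classical
  set F : (Fin m → Bool) × Bool → ℝ :=
    fun p => w k p.2 * ((∏ i, w i (p.1 i)) * g (Function.update p.1 k p.2)) with hF
  have hinv : Function.Involutive
      (fun p : (Fin m → Bool) × Bool => (Function.update p.1 k p.2, p.1 k)) := by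
    intro p
    simp [Function.update_idem, Function.update_eq_self]
  have h1 : ∑ b : Bool, w k b * Ew w (fun s => g (Function.update s k b))
      = ∑ p : (Fin m → Bool) × Bool, F p := by
    rw [Fintype.sum_prod_type, Finset.sum_comm]
    simp only [Ew, Finset.mul_sum, hF]
  have h2 : ∑ p : (Fin m → Bool) × Bool, F p
      = ∑ p : (Fin m → Bool) × Bool, F (hinv.toPerm _ p) :=
    (Equiv.sum_comp (hinv.toPerm _) F).symm
  have h3 : ∀ p : (Fin m → Bool) × Bool, F (hinv.toPerm _ p)
      = w k p.2 * ((∏ i, w i (p.1 i)) * g p.1) := by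
    rintro ⟨s, b⟩
    show F (Function.update s k b, s k) = _
    simp only [hF]
    rw [Function.update_idem, Function.update_eq_self, prod_update]
    have hWs : (∏ i, w i (s i)) = w k (s k) * ∏ i ∈ univ.erase k, w i (s i) :=
      (Finset.mul_prod_erase univ (fun i => w i (s i)) (Finset.mem_univ k)).symm
    rw [hWs]
    ring
  rw [h1, h2]
  simp only [h3]
  rw [Fintype.sum_prod_type]
  refine Finset.sum_congr rfl fun s _ => ?_
  rw [Fintype.sum_bool, ← add_mul]
  have h1k := hw1 k
  have : w k true + w k false = 1 := by linarith
  rw [this, one_mul]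

/-- The set revealed after the first `m` coordinates. -/
def A {n : ℕ} (m : ℕ) (s : Fin n → Bool) : Finset (Fin n) :=
  univ.filter (fun i => (i : ℕ) < m ∧ s i = true)

lemma A_zero {n : ℕ} (s : Fin n → Bool) : A 0 s = ∅ := by
  simp [A]

lemma A_mono {n : ℕ} (m : ℕ) {s t : Fin n → Bool} (hst : s ≤ t) : A m s ⊆ A m t := by
  intro i hi
  simp only [A, mem_filter, mem_univ, true_and] at hi ⊢
  refine ⟨hi.1, ?_⟩
  have h := hst i
  rw [hi.2] at h
  exact le_antisymm (Bool.le_true _) h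

lemma A_update {n : ℕ} (m : ℕ) (s : Fin n → Bool) (k : Fin n) (b : Bool)
    (hk : m ≤ (k : ℕ)) : A m (Function.update s k b) = A m s := by
  ext i
  simp only [A, mem_filter, mem_univ, true_and]
  refine and_congr_right fun hi => ?_
  rw [Function.update_of_ne (fun e => by subst e; omega)]

lemma A_not_mem {n : ℕ} (s : Fin n → Bool) (k : Fin n) : k ∉ A (k : ℕ) s := by
  simp [A]

lemma A_update_true {n : ℕ} (s : Fin n → Bool) (k : Fin n) :
    A ((k : ℕ) + 1) (Function.update s k true) = insert k (A (k : ℕ) s) := by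
  ext i
  simp only [A, mem_filter, mem_univ, true_and, mem_insert, Function.update_apply]
  by_cases hik : i = k
  · subst hik; simp
  · have hv : (i : ℕ) ≠ (k : ℕ) := fun h => hik (Fin.val_injective h)
    simp only [hik, if_false, false_or]
    constructor <;> (rintro ⟨h1, h2⟩; exact ⟨by omega, h2⟩)

lemma A_update_false {n : ℕ} (s : Fin n → Bool) (k : Fin n) :
    A ((k : ℕ) + 1) (Function.update s k false) = A (k : ℕ) s := by
  ext i
  simp only [A, mem_filter, mem_univ, true_and, Function.update_apply]
  by_cases hik : i = k
  · subst hik; simp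
  · have hv : (i : ℕ) ≠ (k : ℕ) := fun h => hik (Fin.val_injective h)
    simp only [hik, if_false]
    constructor
    · rintro ⟨h1, h2⟩; exact ⟨by omega, h2⟩
    · rintro ⟨h1, h2⟩; exact ⟨by omega, h2⟩

/-- The main chain argument on the cube. -/
lemma chain {n : ℕ} (w : Fin n → Bool → ℝ) (hw0 : ∀ i b, 0 ≤ w i b)
    (hw1 : ∀ i, w i false + w i true = 1)
    (f : Finset (Fin n) → ℝ) (hempty : f ∅ = 0)
    (hmono : ∀ S T, S ⊆ T → f S ≤ f T)
    (hsub : ∀ S T, f (S ∪ T) + f (S ∩ T) ≤ f S + f T) (lam : ℝ) :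
    ∀ m : ℕ, m ≤ n →
      Ew w (fun s => Real.exp (lam * f (A m s)))
        ≤ ∏ j ∈ Finset.range m,
            Ew w (fun s => Real.exp (lam * (f (A (j + 1) s) - f (A j s)))) := by
  intro m
  induction m with
  | zero =>
      intro _
      simp only [A_zero, hempty, mul_zero, Real.exp_zero, Finset.range_zero, Finset.prod_empty]
      rw [Ew_one w hw1]
  | succ m ih =>
      intro hmn
      have hm : m < n := hmn
      set k : Fin n := ⟨m, hm⟩ with hk
      have hkv : (k : ℕ) = m := rfl
      -- the two functions
      set g1 : (Fin n → Bool) → ℝ := fun s => Real.exp (lam * f (A m s)) with hg1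
      set hb : Bool → (Fin n → Bool) → ℝ := fun b s =>
        Real.exp (lam * (f (A (m + 1) (Function.update s k b))
          - f (A m (Function.update s k b)))) with hhb
      -- monotonicity facts
      have hA1 : ∀ s b, A m (Function.update s k b) = A m s := fun s b =>
        A_update m s k b (le_of_eq hkv.symm)
      have hmargin : ∀ b, Antitone fun s =>
          f (A (m + 1) (Function.update s k b)) - f (A m (Function.update s k b)) := by
        intro b s t hst
        simp only [hA1]
        cases b
        · rw [show (m + 1) = (k : ℕ) + 1 from by rw [hkv], A_update_false, A_update_false, hkv]
          simp
        · rw [show (m + 1) = (k : ℕ) + 1 from by rw [hkv], A_update_true, A_update_true, hkv]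
          have hST : A m s ⊆ A m t := A_mono m hst
          have hkT : k ∉ A m t := by rw [← hkv]; exact A_not_mem t k
          have hU : insert k (A m s) ∪ A m t = insert k (A m t) := by
            rw [Finset.insert_union, Finset.union_eq_right.2 hST]
          have hI : insert k (A m s) ∩ A m t = A m s := by
            ext i
            simp only [Finset.mem_inter, Finset.mem_insert]
            constructor
            · rintro ⟨h | h, hT⟩
              · exact absurd (h ▸ hT) hkT
              · exact h
            · intro h; exact ⟨Or.inr h, hST h⟩
          have := hsub (insert k (A m s)) (A m t)
          rw [hU, hI] at this
          linarith
      have hFmono : Monotone fun s => f (A m s) :=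
        fun s t hst => hmono _ _ (A_mono m hst)
      -- Harris in either sign
      have hharris : ∀ b, Ew w (fun s => g1 s * hb b s) ≤ Ew w g1 * Ew w (hb b) := by
        intro b
        rcases le_or_gt 0 lam with hlam | hlam
        · refine harris w hw0 hw1 ?_ ?_
          · exact fun s t hst => Real.exp_le_exp.2
              (mul_le_mul_of_nonneg_left (hFmono hst) hlam)
          · exact fun s t hst => Real.exp_le_exp.2
              (mul_le_mul_of_nonneg_left (hmargin b hst) hlam)
        · have h := harris w hw0 hw1
            (g := hb b) (h := g1) ?_ ?_
          · calc Ew w (fun s => g1 s * hb b s) = Ew w (fun s => hb b s * g1 s) := by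
                  simp only [mul_comm]
              _ ≤ Ew w (hb b) * Ew w g1 := h
              _ = Ew w g1 * Ew w (hb b) := mul_comm _ _
          · exact fun s t hst => Real.exp_le_exp.2
              (mul_le_mul_of_nonpos_left (hmargin b hst) hlam.le)
          · exact fun s t hst => Real.exp_le_exp.2
              (mul_le_mul_of_nonpos_left (hFmono hst) hlam.le)
      -- main computation
      have hsubst1 := Ew_subst w hw1 k (fun s => Real.exp (lam * f (A (m + 1) s)))
      have hsubst2 := Ew_subst w hw1 k
        (fun s => Real.exp (lam * (f (A (m + 1) s) - f (A m s))))
      have hfact : ∀ b s, Real.exp (lam * f (A (m + 1) (Function.update s k b)))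
          = g1 s * hb b s := by
        intro b s
        simp only [hg1, hhb, hA1, ← Real.exp_add]
        congr 1
        ring
      calc Ew w (fun s => Real.exp (lam * f (A (m + 1) s)))
          = ∑ b : Bool, w k b * Ew w (fun s => g1 s * hb b s) := by
            rw [← hsubst1]
            refine Finset.sum_congr rfl fun b _ => ?_
            rw [show (fun s => Real.exp (lam * f (A (m + 1) (Function.update s k b))))
                = fun s => g1 s * hb b s from funext (hfact b)]
        _ ≤ ∑ b : Bool, w k b * (Ew w g1 * Ew w (hb b)) := by
            refine Finset.sum_le_sum fun b _ => ?_
            exact mul_le_mul_of_nonneg_left (hharris b) (hw0 k b)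
        _ = Ew w g1 * ∑ b : Bool, w k b * Ew w (hb b) := by
            rw [Finset.mul_sum]
            exact Finset.sum_congr rfl fun b _ => by ring
        _ = Ew w g1 * Ew w (fun s => Real.exp (lam * (f (A (m + 1) s) - f (A m s)))) := by
            rw [← hsubst2]
        _ ≤ (∏ j ∈ Finset.range m,
              Ew w (fun s => Real.exp (lam * (f (A (j + 1) s) - f (A j s)))))
            * Ew w (fun s => Real.exp (lam * (f (A (m + 1) s) - f (A m s)))) := by
            refine mul_le_mul_of_nonneg_right (ih (le_of_lt hmn)) ?_
            exact Ew_nonneg hw0 fun s => (Real.exp_pos _).le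
        _ = ∏ j ∈ Finset.range (m + 1),
              Ew w (fun s => Real.exp (lam * (f (A (j + 1) s) - f (A j s)))) := by
            rw [Finset.prod_range_succ]

end Stmt7Aux

theorem stmt_7 {Ω : Type*} [MeasurableSpace Ω] (P : Measure Ω) [IsProbabilityMeasure P]
    {n : ℕ} (f : Finset (Fin n) → ℝ)
    (hempty : f ∅ = 0)
    (hmono : ∀ S T, S ⊆ T → f S ≤ f T)
    (hsub : ∀ A B, f (A ∪ B) + f (A ∩ B) ≤ f A + f B)
    (X : Fin n → Ω → ℝ)
    (hmeas : ∀ i, Measurable (X i))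
    (h01 : ∀ i ω, X i ω = 0 ∨ X i ω = 1)
    (hindep : iIndepFun X P)
    (Y : Fin n → Ω → ℝ)
    (hY : ∀ k ω, Y k ω =
      f (Finset.univ.filter fun i => i ≤ k ∧ X i ω = 1)
        - f (Finset.univ.filter fun i => i < k ∧ X i ω = 1))
    (lam : ℝ) :
    ∫ ω, Real.exp (lam * ∑ k, Y k ω) ∂P
      ≤ ∏ k, ∫ ω, Real.exp (lam * Y k ω) ∂P := by
  classical
  set σ : Ω → (Fin n → Bool) := fun ω i => decide (X i ω = 1) with hσ
  set E : (Fin n → Bool) → Set Ω :=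
    fun s => ⋂ i, X i ⁻¹' {if s i then (1 : ℝ) else 0} with hE
  have hEmeas : ∀ s, MeasurableSet (E s) :=
    fun s => MeasurableSet.iInter fun i => (hmeas i) (measurableSet_singleton _)
  have hmemE : ∀ ω s, ω ∈ E s ↔ σ ω = s := by
    intro ω s
    simp only [hE, Set.mem_iInter, Set.mem_preimage, Set.mem_singleton_iff, funext_iff, hσ]
    refine forall_congr' fun i => ?_
    rcases h01 i ω with h | h <;> cases hsi : s i <;> simp [h, hsi]
  -- integral of a function of σ
  have hint : ∀ u : (Fin n → Bool) → ℝ,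
      ∫ ω, u (σ ω) ∂P = ∑ s : Fin n → Bool, (P (E s)).toReal * u s := by
    intro u
    have hrepr : ∀ ω, u (σ ω) = ∑ s : Fin n → Bool,
        Set.indicator (E s) (fun _ => u s) ω := by
      intro ω
      rw [Finset.sum_eq_single (σ ω)]
      · rw [Set.indicator_of_mem ((hmemE ω (σ ω)).2 rfl)]
      · intro s _ hs
        exact Set.indicator_of_notMem (fun h => hs ((hmemE ω s).1 h).symm) _
      · intro h; exact absurd (Finset.mem_univ _) h
    calc ∫ ω, u (σ ω) ∂P
        = ∫ ω, ∑ s : Fin n → Bool, Set.indicator (E s) (fun _ => u s) ω ∂P :=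
          integral_congr_ae (Filter.Eventually.of_forall hrepr)
      _ = ∑ s : Fin n → Bool, ∫ ω, Set.indicator (E s) (fun _ => u s) ω ∂P :=
          integral_finset_sum _ fun s _ => (integrable_const (u s)).indicator (hEmeas s)
      _ = ∑ s : Fin n → Bool, (P (E s)).toReal * u s := by
          refine Finset.sum_congr rfl fun s _ => ?_
          rw [integral_indicator_const (u s) (hEmeas s), smul_eq_mul, measureReal_def]
  -- the weights
  set w : Fin n → Bool → ℝ :=
    fun i b => (P (X i ⁻¹' {if b then (1 : ℝ) else 0})).toReal with hw
  have hw0 : ∀ i b, 0 ≤ w i b := fun i b => ENNReal.toReal_nonneg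
  have hw1 : ∀ i, w i false + w i true = 1 := by
    intro i
    have hd : Disjoint (X i ⁻¹' {(0 : ℝ)}) (X i ⁻¹' {(1 : ℝ)}) := by
      rw [Set.disjoint_left]
      intro ω h0 h1
      simp only [Set.mem_preimage, Set.mem_singleton_iff] at h0 h1
      exact zero_ne_one (h0 ▸ h1)
    have hu : X i ⁻¹' {(0 : ℝ)} ∪ X i ⁻¹' {(1 : ℝ)} = Set.univ := by
      ext ω
      simp only [Set.mem_union, Set.mem_preimage, Set.mem_singleton_iff, Set.mem_univ, iff_true]
      exact h01 i ω
    have hsum : P (X i ⁻¹' {(0 : ℝ)}) + P (X i ⁻¹' {(1 : ℝ)}) = 1 := by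
      rw [← measure_union hd ((hmeas i) (measurableSet_singleton _)), hu, measure_univ]
    have e0 : w i false = (P (X i ⁻¹' {(0 : ℝ)})).toReal := by norm_num [hw]
    have e1 : w i true = (P (X i ⁻¹' {(1 : ℝ)})).toReal := by norm_num [hw]
    rw [e0, e1, ← ENNReal.toReal_add (measure_ne_top P _) (measure_ne_top P _), hsum,
      ENNReal.toReal_one]
  have hPE : ∀ s, (P (E s)).toReal = ∏ i, w i (s i) := by
    intro s
    rw [hE]
    rw [hindep.meas_iInter (fun i => ⟨{if s i then (1 : ℝ) else 0},
      measurableSet_singleton _, rfl⟩)]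
    exact ENNReal.toReal_prod _ _
  -- identify the integrands
  have hFA : ∀ (ω : Ω) (m : ℕ),
      f (Finset.univ.filter fun i : Fin n => (i : ℕ) < m ∧ X i ω = 1)
        = f (Stmt7Aux.A m (σ ω)) := by
    intro ω m
    congr 1
    refine Finset.filter_congr fun i _ => ?_
    refine and_congr_right fun _ => ?_
    simp [hσ]
  have hYk : ∀ (k : Fin n) (ω : Ω),
      Y k ω = f (Stmt7Aux.A ((k : ℕ) + 1) (σ ω)) - f (Stmt7Aux.A (k : ℕ) (σ ω)) := by
    intro k ω
    rw [hY]
    have e1 : (Finset.univ.filter fun i => i ≤ k ∧ X i ω = 1)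
        = Finset.univ.filter fun i : Fin n => (i : ℕ) < (k : ℕ) + 1 ∧ X i ω = 1 := by
      refine Finset.filter_congr fun i _ => ?_
      refine and_congr_left fun _ => ?_
      rw [Fin.le_def]
      omega
    have e2 : (Finset.univ.filter fun i => i < k ∧ X i ω = 1)
        = Finset.univ.filter fun i : Fin n => (i : ℕ) < (k : ℕ) ∧ X i ω = 1 := by
      refine Finset.filter_congr fun i _ => ?_
      refine and_congr_left fun _ => ?_
      exact Fin.lt_def
    rw [e1, e2, hFA, hFA]
  have hsumY : ∀ ω : Ω, ∑ k, Y k ω = f (Stmt7Aux.A n (σ ω)) := by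
    intro ω
    calc ∑ k : Fin n, Y k ω
        = ∑ k : Fin n, (f (Stmt7Aux.A ((k : ℕ) + 1) (σ ω)) - f (Stmt7Aux.A (k : ℕ) (σ ω))) :=
          Finset.sum_congr rfl fun k _ => hYk k ω
      _ = ∑ j ∈ Finset.range n,
            (f (Stmt7Aux.A (j + 1) (σ ω)) - f (Stmt7Aux.A j (σ ω))) :=
          Fin.sum_univ_eq_sum_range
            (fun j => f (Stmt7Aux.A (j + 1) (σ ω)) - f (Stmt7Aux.A j (σ ω))) n
      _ = f (Stmt7Aux.A n (σ ω)) - f (Stmt7Aux.A 0 (σ ω)) :=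
          Finset.sum_range_sub (fun j => f (Stmt7Aux.A j (σ ω))) n
      _ = f (Stmt7Aux.A n (σ ω)) := by rw [Stmt7Aux.A_zero, hempty, sub_zero]
  -- rewrite both sides via the cube expectation
  have hLHS : ∫ ω, Real.exp (lam * ∑ k, Y k ω) ∂P
      = Stmt7Aux.Ew w (fun s => Real.exp (lam * f (Stmt7Aux.A n s))) := by
    have : ∀ ω, Real.exp (lam * ∑ k, Y k ω)
        = (fun s => Real.exp (lam * f (Stmt7Aux.A n s))) (σ ω) := by
      intro ω; rw [hsumY ω]
    rw [integral_congr_ae (Filter.Eventually.of_forall this),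
      hint (fun s => Real.exp (lam * f (Stmt7Aux.A n s)))]
    simp only [Stmt7Aux.Ew]
    exact Finset.sum_congr rfl fun s _ => by rw [hPE]
  have hRHS : ∀ k : Fin n, ∫ ω, Real.exp (lam * Y k ω) ∂P
      = Stmt7Aux.Ew w (fun s => Real.exp
          (lam * (f (Stmt7Aux.A ((k : ℕ) + 1) s) - f (Stmt7Aux.A (k : ℕ) s)))) := by
    intro k
    have : ∀ ω, Real.exp (lam * Y k ω)
        = (fun s => Real.exp
            (lam * (f (Stmt7Aux.A ((k : ℕ) + 1) s) - f (Stmt7Aux.A (k : ℕ) s)))) (σ ω) := by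
      intro ω; rw [hYk k ω]
    rw [integral_congr_ae (Filter.Eventually.of_forall this),
      hint (fun s => Real.exp
        (lam * (f (Stmt7Aux.A ((k : ℕ) + 1) s) - f (Stmt7Aux.A (k : ℕ) s))))]
    simp only [Stmt7Aux.Ew]
    exact Finset.sum_congr rfl fun s _ => by rw [hPE]
  rw [hLHS]
  calc Stmt7Aux.Ew w (fun s => Real.exp (lam * f (Stmt7Aux.A n s)))
      ≤ ∏ j ∈ Finset.range n, Stmt7Aux.Ew w
          (fun s => Real.exp (lam * (f (Stmt7Aux.A (j + 1) s) - f (Stmt7Aux.A j s)))) :=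
        Stmt7Aux.chain w hw0 hw1 f hempty hmono hsub lam n le_rfl
    _ = ∏ k : Fin n, Stmt7Aux.Ew w
          (fun s => Real.exp (lam * (f (Stmt7Aux.A ((k : ℕ) + 1) s) - f (Stmt7Aux.A (k : ℕ) s)))) :=
        (Fin.prod_univ_eq_prod_range _ n).symm
    _ = ∏ k, ∫ ω, Real.exp (lam * Y k ω) ∂P :=
        Finset.prod_congr rfl fun k _ => (hRHS k).symm
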